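/- Let Φ = Φ₁i + Φ₂j + Φ₃k be a quaternion over the polynomial ring ℂ[z] (i.e., an element of Quaternion (Polynomial ℂ)) with zero scalar part, satisfying the isotropy condition Φ₁² + Φ₂² + Φ₃² = 0 in ℂ[z] (equivalently normSq Φ = 0). Then there exist a polynomial λ ∈ ℂ[z] and a quaternion A over ℂ[z] such that Φ = λ·(A·L·A^c), where λ acts as a central scalar and L = i + 𝕚j (with 𝕚 the constant polynomial Complex.I). -/

import Mathlib

open Quaternion Polynomial

/-- The null quaternion `L = i + 𝕚 j` over the polynomial ring `ℂ[z]`. -/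
noncomputable def Lpoly : Quaternion (Polynomial ℂ) :=
  ⟨0, 1, C Complex.I, 0⟩

/-- Any polynomial associated to a square is a square (units of `ℂ[z]` are squares). -/
lemma assoc_sq_is_sq {P t : Polynomial ℂ} (h : Associated (t ^ 2) P) :
    ∃ f : Polynomial ℂ, P = f ^ 2 := by
  obtain ⟨u, hu⟩ := h
  obtain ⟨c, hc, hcu⟩ := Polynomial.isUnit_iff.mp u.isUnit
  obtain ⟨a, ha⟩ := IsAlgClosed.exists_pow_nat_eq (k := ℂ) c zero_lt_two
  refine ⟨t * C a, ?_⟩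
  rw [← hu, ← hcu, ← ha]
  push_cast [mul_pow, ← Polynomial.C_pow]
  ring

/-- Key factorization lemma: if `P * Q = S ^ 2` in `ℂ[z]`, then there are `lam f g` with
`P = lam f²`, `Q = lam g²`, `S = lam f g`. -/
lemma key_factor (P Q S : Polynomial ℂ) (h : P * Q = S ^ 2) :
    ∃ lam f g : Polynomial ℂ, P = lam * f ^ 2 ∧ Q = lam * g ^ 2 ∧ S = lam * f * g := by
  by_cases hP : P = 0
  · have hS : S = 0 := by
      have h0 : S ^ 2 = 0 := by rw [← h, hP, zero_mul]
      exact pow_eq_zero_iff two_ne_zero |>.mp h0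
    exact ⟨Q, 0, 1, by simp [hP], by simp, by simp [hS]⟩
  by_cases hQ : Q = 0
  · have hS : S = 0 := by
      have : S ^ 2 = 0 := by rw [← h, hQ, mul_zero]
      exact (pow_eq_zero_iff (two_ne_zero)).mp this
    exact ⟨P, 1, 0, by simp, by simp [hQ], by simp [hS]⟩
  -- main case
  set d := gcd P Q with hd
  have hd0 : d ≠ 0 := fun h0 => hP ((gcd_eq_zero_iff P Q).mp h0).1
  obtain ⟨P', hP'⟩ := gcd_dvd_left P Q
  obtain ⟨Q', hQ'⟩ := gcd_dvd_right P Q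
  -- coprimality of P' Q'
  have hcop : IsCoprime P' Q' := by
    rw [← gcd_isUnit_iff]
    have hg : normalize d * gcd P' Q' = d := by
      rw [← gcd_mul_left, ← hP', ← hQ']
    have hg1 : d * ((normUnit d : Polynomial ℂ) * gcd P' Q') = d * 1 := by
      rw [mul_one, ← mul_assoc, ← normalize_apply, hg]
    have hu := mul_left_cancel₀ hd0 hg1
    exact IsUnit.of_mul_eq_one _ (by rw [mul_comm]; exact hu)
  have hPQ' : P' * Q' * d ^ 2 = S ^ 2 := by
    linear_combination h - Q * hP' - d * P' * hQ'  
  have hdS : d ∣ S := by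
    have hdvd : d ^ 2 ∣ S ^ 2 := ⟨P' * Q', by linear_combination -hPQ'⟩
    exact (IsIntegrallyClosed.pow_dvd_pow_iff two_ne_zero).mp hdvd
  obtain ⟨e, he⟩ := hdS
  have he2 : P' * Q' = e ^ 2 := by
    have : (P' * Q') * d ^ 2 = e ^ 2 * d ^ 2 := by rw [hPQ', he]; ring
    exact mul_right_cancel₀ (pow_ne_zero 2 hd0) this
  obtain ⟨t, ht⟩ := exists_associated_pow_of_mul_eq_pow' hcop he2
  obtain ⟨f, hf⟩ := assoc_sq_is_sq ht
  have hf0 : f ≠ 0 := by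
    intro h0
    apply hP
    rw [hP', hf, h0]
    ring
  have hfe : f ∣ e := by
    have hdvd : f ^ 2 ∣ e ^ 2 := ⟨Q', by linear_combination -he2 + Q' * hf⟩
    exact (IsIntegrallyClosed.pow_dvd_pow_iff two_ne_zero).mp hdvd
  obtain ⟨g, hg⟩ := hfe
  have hQ'g : Q' = g ^ 2 := by
    have : f ^ 2 * Q' = f ^ 2 * g ^ 2 := by
      linear_combination (-Q') * hf + he2 + (e + f * g) * hg
    exact mul_left_cancel₀ (pow_ne_zero 2 hf0) this
  exact ⟨d, f, g, by rw [hP', hf], by rw [hQ', hQ'g], by rw [he, hg]; ring⟩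

/-- Every isotropic purely vectorial quaternion `Φ` over `ℂ[z]` can be written
as `Φ = λ • (A L A^c)` with `λ ∈ ℂ[z]` and `A` a quaternion over `ℂ[z]`. -/
theorem poly_minimal_representation (Φ : Quaternion (Polynomial ℂ))
    (hre : Φ.re = 0) (hiso : Φ.imI ^ 2 + Φ.imJ ^ 2 + Φ.imK ^ 2 = 0) :
    ∃ (lam : Polynomial ℂ) (A : Quaternion (Polynomial ℂ)),
      Φ = lam • (A * Lpoly * star A) := by
  set P : Polynomial ℂ := Φ.imI - C Complex.I * Φ.imJ with hPdef
  set Q : Polynomial ℂ := Φ.imI + C Complex.I * Φ.imJ with hQdef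
  set S : Polynomial ℂ := -(C Complex.I * Φ.imK) with hSdef
  have hI2 : (C Complex.I : Polynomial ℂ) ^ 2 = -1 := by
    rw [← Polynomial.C_pow, Complex.I_sq]; simp
  have hPQ : P * Q = S ^ 2 := by
    rw [hPdef, hQdef, hSdef]
    linear_combination hiso - (Φ.imJ ^ 2 + Φ.imK ^ 2) * hI2
  obtain ⟨lam, f, g, h1, h2, h3⟩ := key_factor P Q S hPQ
  obtain ⟨A, hA'⟩ : ∃ A : ℍ[ℂ[X]], A.re = f ∧ A.imI = g ∧ A.imJ = 0 ∧ A.imK = 0 :=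
    ⟨⟨f, g, 0, 0⟩, rfl, rfl, rfl, rfl⟩
  have hL : Lpoly.re = 0 ∧ Lpoly.imI = 1 ∧ Lpoly.imJ = C Complex.I ∧ Lpoly.imK = 0 :=
    ⟨rfl, rfl, rfl, rfl⟩
  refine ⟨C (2⁻¹ : ℂ) * lam, A, ?_⟩
  have h2inv : (C (2⁻¹ : ℂ) : Polynomial ℂ) * 2 = 1 := by
    have : (2 : Polynomial ℂ) = C (2 : ℂ) := (map_ofNat C 2).symm
    rw [this, ← Polynomial.C_mul]; norm_num
  rw [hPdef] at h1; rw [hQdef] at h2; rw [hSdef] at h3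
  refine QuaternionAlgebra.ext ?_ ?_ ?_ ?_ <;>
      simp [hL, hA', re_mul, imI_mul, imJ_mul, imK_mul, hre]
  · exact Or.inr (by ring)
  · linear_combination C (2⁻¹ : ℂ) * h1 + C (2⁻¹ : ℂ) * h2 - Φ.imI * h2inv
  · linear_combination (- C (2⁻¹ : ℂ) * C Complex.I) * h2 + (C (2⁻¹ : ℂ) * C Complex.I) * h1 -
      Φ.imJ * h2inv + (2 * C (2⁻¹ : ℂ) * Φ.imJ) * hI2
  · linear_combination (2 * C (2⁻¹ : ℂ) * C Complex.I) * h3 - Φ.imK * h2inv +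
      (2 * C (2⁻¹ : ℂ) * Φ.imK) * hI2
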